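/- There exists an absolute constant c > 0 with the following property. Let X and Y be compact convex subsets of ℝ² with nonempty interiors, and suppose t* ∈ ℝ² realizes the maximum overlap, i.e., area(X ∩ (t* + Y)) = sup_{t ∈ ℝ²} area(X ∩ (t + Y)); set M = X ∩ (t* + Y). Then there exist a rectangle r centered at the origin and a vector u ∈ ℝ² such that r ⊆ u + M ⊆ c·r. Furthermore, for every translation t ∈ ℝ², the set X ∩ (t + Y) is contained under translation in c·r. -/

import Mathlib

open MeasureTheory Pointwise

noncomputable section

abbrev Plane := EuclideanSpace ℝ (Fin 2)

/-- A rectangle centered at the origin: all points `s₁ • u + s₂ • v` with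
`|s₁| ≤ a`, `|s₂| ≤ b`, for an orthonormal pair `u, v` and positive `a, b`. -/
def IsOriginRectangle (r : Set Plane) : Prop :=
  ∃ (u v : Plane) (a b : ℝ), ‖u‖ = 1 ∧ ‖v‖ = 1 ∧ (inner ℝ u v : ℝ) = 0 ∧ 0 < a ∧ 0 < b ∧
    r = {p : Plane | ∃ s₁ s₂ : ℝ, |s₁| ≤ a ∧ |s₂| ≤ b ∧ p = s₁ • u + s₂ • v}

/-- `A` is contained under translation in `B`. -/
def ContainedUnderTranslation (A B : Set Plane) : Prop :=
  ∃ v : Plane, v +ᵥ A ⊆ B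

namespace ConstApproxRect

lemma inner_coords (x y : Plane) : (inner ℝ x y : ℝ) = x 0 * y 0 + x 1 * y 1 := by
  simp [PiLp.inner_apply, Fin.sum_univ_two, mul_comm]

lemma norm_one_coords (u : Plane) (h : ‖u‖ = 1) : u 0 ^ 2 + u 1 ^ 2 = 1 := by
  have h2 : Real.sqrt (u 0 ^ 2 + u 1 ^ 2) = 1 := by
    rw [← h, EuclideanSpace.norm_eq, Fin.sum_univ_two]
    norm_num [Real.norm_eq_abs, sq_abs]
  nlinarith [Real.sq_sqrt (by positivity : (0:ℝ) ≤ u 0 ^ 2 + u 1 ^ 2), h2]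

lemma ortho_coords (u v : Plane) (hu : ‖u‖ = 1) (hv : ‖v‖ = 1) (huv : (inner ℝ u v : ℝ) = 0) :
    ∃ dd : ℝ, v 0 = -dd * u 1 ∧ v 1 = dd * u 0 ∧ dd ^ 2 = 1 := by
  have hu2 := norm_one_coords u hu
  have hv2 := norm_one_coords v hv
  have huv2 : u 0 * v 0 + u 1 * v 1 = 0 := by rw [inner_coords] at huv; linarith
  refine ⟨u 0 * v 1 - v 0 * u 1, ?_, ?_, ?_⟩
  · linear_combination u 0 * huv2 - v 0 * hu2
  · linear_combination (-(v 1)) * hu2 + u 1 * huv2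
  · linear_combination (v 0 ^ 2 + v 1 ^ 2) * hu2 + hv2 - (u 0 * v 0 + u 1 * v 1) * huv2

lemma decomp (u v : Plane) (hu : ‖u‖ = 1) (hv : ‖v‖ = 1) (huv : (inner ℝ u v : ℝ) = 0)
    (w : Plane) : w = (inner ℝ w u : ℝ) • u + (inner ℝ w v : ℝ) • v := by
  obtain ⟨dd, hv0, hv1, hd2⟩ := ortho_coords u v hu hv huv
  have hu2 := norm_one_coords u hu
  have h0 : w 0 = (inner ℝ w u : ℝ) * u 0 + (inner ℝ w v : ℝ) * v 0 := by
    rw [inner_coords, inner_coords, hv0, hv1]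
    linear_combination (w 1 * u 0 * u 1 - w 0 * u 1 ^ 2) * hd2 - w 0 * hu2
  have h1 : w 1 = (inner ℝ w u : ℝ) * u 1 + (inner ℝ w v : ℝ) * v 1 := by
    rw [inner_coords, inner_coords, hv0, hv1]
    linear_combination (w 0 * u 0 * u 1 - w 1 * u 0 ^ 2) * hd2 - w 1 * hu2
  ext i
  fin_cases i
  · simpa using h0
  · simpa using h1

/-- The vector in the plane with the given coordinates. -/
def mk2 (a b : ℝ) : Plane := (EuclideanSpace.equiv (Fin 2) ℝ).symm ![a, b]

@[simp] lemma mk2_apply_zero (a b : ℝ) : mk2 a b 0 = a := rfl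
@[simp] lemma mk2_apply_one (a b : ℝ) : mk2 a b 1 = b := rfl

lemma volume_box (a b c d : ℝ) :
    volume {x : Plane | x 0 ∈ Set.Icc a b ∧ x 1 ∈ Set.Icc c d}
      = ENNReal.ofReal (b - a) * ENNReal.ofReal (d - c) := by
  have h := (EuclideanSpace.volume_preserving_symm_measurableEquiv_toLp (Fin 2)).measure_preimage
    (s := Set.univ.pi ![Set.Icc a b, Set.Icc c d]) ?_
  · have heq : (MeasurableEquiv.toLp 2 (Fin 2 → ℝ)).symm ⁻¹' (Set.univ.pi ![Set.Icc a b, Set.Icc c d])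
        = {x : Plane | x 0 ∈ Set.Icc a b ∧ x 1 ∈ Set.Icc c d} := by
      ext x
      simp [Set.mem_pi, Fin.forall_fin_two]
    rw [heq] at h
    rw [h, volume_pi_pi]
    simp [Fin.prod_univ_two, Real.volume_Icc]
  · exact (MeasurableSet.univ_pi (by
      intro i; fin_cases i <;> simp [measurableSet_Icc])).nullMeasurableSet

/-- The linear map sending the standard basis to `w₁, w₂`. -/
def lmap (w₁ w₂ : Plane) : Plane →ₗ[ℝ] Plane :=
  Matrix.toEuclideanLin !![w₁ 0, w₂ 0; w₁ 1, w₂ 1]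

lemma lmap_apply (w₁ w₂ x : Plane) : lmap w₁ w₂ x = x 0 • w₁ + x 1 • w₂ := by
  ext i
  fin_cases i <;>
    simp [lmap, Matrix.toEuclideanLin, Matrix.mulVec, dotProduct, Fin.sum_univ_two, Matrix.vecHead, Matrix.vecTail] <;>
    ring

lemma volume_lmap_image (w₁ w₂ : Plane) (s : Set Plane) :
    volume (lmap w₁ w₂ '' s)
      = ENNReal.ofReal |w₁ 0 * w₂ 1 - w₂ 0 * w₁ 1| * volume s := by
  rw [Measure.addHaar_image_linearMap]
  congr 2
  rw [lmap, Matrix.toEuclideanLin_eq_toLin, LinearMap.det_toLin]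
  simp [Matrix.det_fin_two]

def rectSet (u v : Plane) (a b : ℝ) : Set Plane :=
  {p : Plane | ∃ s₁ s₂ : ℝ, |s₁| ≤ a ∧ |s₂| ≤ b ∧ p = s₁ • u + s₂ • v}

lemma mem_smul_rectSet {u v y : Plane} {a b c s₁ s₂ : ℝ} (hc : 0 < c)
    (hy : y = s₁ • u + s₂ • v) (h1 : |s₁| ≤ c * a) (h2 : |s₂| ≤ c * b) :
    y ∈ c • rectSet u v a b := by
  refine ⟨(s₁ / c) • u + (s₂ / c) • v, ⟨s₁ / c, s₂ / c, ?_, ?_, rfl⟩, ?_⟩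
  · rw [abs_div, abs_of_pos hc, div_le_iff₀ hc]
    linarith [h1]
  · rw [abs_div, abs_of_pos hc, div_le_iff₀ hc]
    linarith [h2]
  · show c • ((s₁ / c) • u + (s₂ / c) • v) = y
    rw [hy, smul_add, smul_smul, smul_smul, mul_div_cancel₀ _ hc.ne', mul_div_cancel₀ _ hc.ne']

end ConstApproxRect

set_option maxHeartbeats 1600000 in
open ConstApproxRect in
theorem const_approx_by_rect :
    ∃ c : ℝ, 0 < c ∧
      ∀ X Y : Set Plane,
        IsCompact X → Convex ℝ X → (interior X).Nonempty →
        IsCompact Y → Convex ℝ Y → (interior Y).Nonempty →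
        ∀ tstar : Plane,
          volume (X ∩ (tstar +ᵥ Y)) = ⨆ t : Plane, volume (X ∩ (t +ᵥ Y)) →
          ∃ (r : Set Plane) (u : Plane), IsOriginRectangle r ∧
            r ⊆ u +ᵥ (X ∩ (tstar +ᵥ Y)) ∧
            u +ᵥ (X ∩ (tstar +ᵥ Y)) ⊆ c • r ∧
            ∀ t : Plane, ContainedUnderTranslation (X ∩ (t +ᵥ Y)) (c • r) := by
  refine ⟨64, by norm_num, ?_⟩
  intro X Y hXc hXconv hXint hYc hYconv hYint tstar hsup
  set M := X ∩ (tstar +ᵥ Y) with hMdef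
  have hMc : IsCompact M := hXc.inter_right (hYc.vadd tstar).isClosed
  have hMconv : Convex ℝ M := hXconv.inter (hYconv.vadd tstar)
  have hsupb : ∀ t' : Plane, volume (X ∩ (t' +ᵥ Y)) ≤ volume M := by
    intro t'
    rw [hsup]
    exact le_iSup (fun t : Plane => volume (X ∩ (t +ᵥ Y))) t'
  have hpos : (0 : ENNReal) < volume M := by
    obtain ⟨x₀, hx₀⟩ := hXint
    obtain ⟨y₀, hy₀⟩ := hYint
    have hopen : IsOpen (interior X ∩ ((x₀ - y₀) +ᵥ interior Y)) :=
      isOpen_interior.inter (isOpen_interior.vadd _)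
    have hmem : x₀ ∈ interior X ∩ ((x₀ - y₀) +ᵥ interior Y) :=
      ⟨hx₀, Set.mem_vadd_set.mpr ⟨y₀, hy₀, sub_add_cancel x₀ y₀⟩⟩
    have h1 : 0 < volume (interior X ∩ ((x₀ - y₀) +ᵥ interior Y)) :=
      hopen.measure_pos _ ⟨x₀, hmem⟩
    refine h1.trans_le ((measure_mono ?_).trans (hsupb (x₀ - y₀)))
    exact Set.inter_subset_inter interior_subset (Set.vadd_set_mono interior_subset)
  have hMint : (interior M).Nonempty := by
    by_contra hc
    have hne : ¬ affineSpan ℝ M = ⊤ := by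
      rw [← hMconv.interior_nonempty_iff_affineSpan_eq_top]
      exact hc
    have h0 : volume M = 0 :=
      measure_mono_null (subset_affineSpan ℝ M) (Measure.addHaar_affineSubspace _ _ hne)
    rw [h0] at hpos
    exact lt_irrefl _ hpos
  obtain ⟨z, hz⟩ := hMint
  obtain ⟨ε, hε, hball⟩ := Metric.mem_nhds_iff.mp (mem_interior_iff_mem_nhds.mp hz)
  have hzM : z ∈ M := hball (Metric.mem_ball_self hε)
  have hMne : M.Nonempty := ⟨z, hzM⟩
  have hpert : ∀ w : Plane, ‖w‖ = 1 → z + (ε / 2) • w ∈ M := by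
    intro w hw
    apply hball
    rw [Metric.mem_ball, dist_eq_norm]
    have he : z + (ε / 2) • w - z = (ε / 2) • w := by abel
    rw [he, norm_smul, hw, mul_one, Real.norm_eq_abs, abs_of_pos (half_pos hε)]
    linarith
  -- diameter
  have hcontd : ContinuousOn (fun pq : Plane × Plane => dist pq.1 pq.2) (M ×ˢ M) :=
    continuous_dist.continuousOn
  obtain ⟨pq, hpq, hpqmax⟩ := (hMc.prod hMc).exists_isMaxOn (hMne.prod hMne) hcontd
  obtain ⟨p, q⟩ := pq
  have hpM : p ∈ M := hpq.1
  have hqM : q ∈ M := hpq.2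
  have hdiam : ∀ x ∈ M, ∀ y ∈ M, dist x y ≤ dist p q := by
    intro x hx y hy
    have := hpqmax (Set.mk_mem_prod hx hy)
    exact this
  set d := dist p q with hd_def
  have hunit : ‖(mk2 1 0 : Plane)‖ = 1 := by
    have : Real.sqrt ((1:ℝ) ^ 2 + 0 ^ 2) = 1 := by norm_num
    rw [EuclideanSpace.norm_eq, Fin.sum_univ_two]
    simpa [Real.norm_eq_abs, sq_abs] using this
  have hd : 0 < d := by
    have h1 : dist z (z + (ε / 2) • (mk2 1 0 : Plane)) = ε / 2 := by
      rw [dist_eq_norm]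
      have he : z - (z + (ε / 2) • (mk2 1 0 : Plane)) = -((ε / 2) • (mk2 1 0 : Plane)) := by abel
      rw [he, norm_neg, norm_smul, hunit, mul_one, Real.norm_eq_abs, abs_of_pos (half_pos hε)]
    have h2 := hdiam z hzM _ (hpert (mk2 1 0) hunit)
    rw [h1] at h2
    linarith [half_pos hε]
  set u := d⁻¹ • (q - p) with hu_def
  have hqp : q - p = d • u := by rw [hu_def, smul_inv_smul₀ hd.ne']
  have hu1 : ‖u‖ = 1 := by
    rw [hu_def, norm_smul, Real.norm_eq_abs, abs_of_pos (inv_pos.mpr hd)]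
    have : ‖q - p‖ = d := by rw [hd_def, dist_eq_norm']
    rw [this, inv_mul_cancel₀ hd.ne']
  have huu : (inner ℝ u u : ℝ) = 1 := by
    rw [real_inner_self_eq_norm_sq, hu1]; norm_num
  have hslab : ∀ x ∈ M, 0 ≤ (inner ℝ (x - p) u : ℝ) ∧ (inner ℝ (x - p) u : ℝ) ≤ d := by
    intro x hx
    constructor
    · have h1 : (inner ℝ (q - x) u : ℝ) ≤ d := by
        calc (inner ℝ (q - x) u : ℝ) ≤ ‖q - x‖ * ‖u‖ := real_inner_le_norm _ _
          _ = dist q x := by rw [hu1, mul_one, dist_eq_norm]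
          _ ≤ d := hdiam q hqM x hx
      have h2 : (inner ℝ (q - p) u : ℝ) = d := by
        rw [hqp, real_inner_smul_left, huu, mul_one]
      have h3 : (inner ℝ (x - p) u : ℝ) = inner ℝ (q - p) u - (inner ℝ (q - x) u : ℝ) := by
        rw [← inner_sub_left]
        congr 1
        abel
      rw [h3, h2]
      linarith
    · calc (inner ℝ (x - p) u : ℝ) ≤ ‖x - p‖ * ‖u‖ := real_inner_le_norm _ _
        _ = dist x p := by rw [hu1, mul_one, dist_eq_norm]
        _ ≤ d := hdiam x hx p hpM
  -- the orthogonal direction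
  set v₀ := (mk2 (-(u 1)) (u 0) : Plane) with hv₀_def
  have hu2 := norm_one_coords u hu1
  have hv₀1 : ‖v₀‖ = 1 := by
    have h2 : Real.sqrt ((-(u 1)) ^ 2 + (u 0) ^ 2) = 1 := by
      rw [show (-(u 1)) ^ 2 + (u 0) ^ 2 = u 0 ^ 2 + u 1 ^ 2 by ring, hu2, Real.sqrt_one]
    rw [hv₀_def, EuclideanSpace.norm_eq, Fin.sum_univ_two]
    simpa [Real.norm_eq_abs, sq_abs] using h2
  have huv₀ : (inner ℝ u v₀ : ℝ) = 0 := by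
    rw [inner_coords, hv₀_def]
    simp
    ring
  have hcontv : ∀ vv : Plane, ContinuousOn (fun x : Plane => (inner ℝ (x - p) vv : ℝ)) M :=
    fun vv => ((continuous_id.sub continuous_const).inner continuous_const).continuousOn
  clear_value d u v₀
  obtain ⟨mp, hmpM, hmpmax⟩ := hMc.exists_isMaxOn hMne (hcontv v₀)
  obtain ⟨mm, hmmM, hmmmax⟩ := hMc.exists_isMaxOn hMne (hcontv (-v₀))
  have main : ∀ (v m : Plane), ‖v‖ = 1 → (inner ℝ u v : ℝ) = 0 → m ∈ M →
      (∀ x ∈ M, (inner ℝ (x - p) v : ℝ) ≤ inner ℝ (m - p) v) →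
      (∀ x ∈ M, -(inner ℝ (m - p) v : ℝ) ≤ inner ℝ (x - p) v) →
      ∃ (r : Set Plane) (uu : Plane), IsOriginRectangle r ∧
        r ⊆ uu +ᵥ M ∧ uu +ᵥ M ⊆ (64 : ℝ) • r ∧
        ∀ t : Plane, ContainedUnderTranslation (X ∩ (t +ᵥ Y)) ((64 : ℝ) • r) := by
    intro v m hv huv hmM hmmax hmlow
    obtain ⟨dd, hdv0, hdv1, hdd2⟩ := ortho_coords u v hu1 hv huv
    have hdd1 : |dd| = 1 := by nlinarith [abs_nonneg dd, sq_abs dd]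
    have hvv : (inner ℝ v v : ℝ) = 1 := by rw [real_inner_self_eq_norm_sq, hv]; norm_num
    set h := (inner ℝ (m - p) v : ℝ) with hh_def
    have hh2 : ε / 2 ≤ h := by
      have h1 := hmmax (z + (ε / 2) • v) (hpert v hv)
      have h2 := hmlow (z + (ε / 2) • (-v)) (hpert (-v) (by rw [norm_neg]; exact hv))
      have e1 : (inner ℝ (z + (ε / 2) • v - p) v : ℝ) = inner ℝ (z - p) v + ε / 2 := by
        have he : z + (ε / 2) • v - p = (z - p) + (ε / 2) • v := by abel
        rw [he, inner_add_left, real_inner_smul_left, hvv, mul_one]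
      have e2 : (inner ℝ (z + (ε / 2) • (-v) - p) v : ℝ) = inner ℝ (z - p) v - ε / 2 := by
        have he : z + (ε / 2) • (-v) - p = (z - p) - (ε / 2) • v := by
          rw [smul_neg]; abel
        rw [he, inner_sub_left, real_inner_smul_left, hvv, mul_one]
      rw [e1] at h1
      rw [e2] at h2
      linarith
    have hh0 : 0 < h := lt_of_lt_of_le (half_pos hε) hh2
    clear_value h
    obtain ⟨hx₀0, hx₀d⟩ := hslab m hmM
    set x₀ := (inner ℝ (m - p) u : ℝ) with hx₀_def
    clear_value x₀
    have hm_eq : m = p + x₀ • u + h • v := by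
      have hde := decomp u v hu1 hv huv (m - p)
      calc m = p + (m - p) := by abel
        _ = p + ((inner ℝ (m - p) u : ℝ) • u + (inner ℝ (m - p) v : ℝ) • v) := by rw [← hde]
        _ = p + x₀ • u + h • v := by rw [← hx₀_def, ← hh_def]; abel
    have hq_eq : q = p + d • u := by
      calc q = p + (q - p) := by abel
        _ = p + d • u := by rw [hqp]
    set A := d / 4 with hA_def
    set B := h / 4 with hB_def
    have hA : 0 < A := by rw [hA_def]; linarith
    have hB : 0 < B := by rw [hB_def]; linarith
    clear_value A B
    set c₀ := p + (x₀ / 2 + d / 4) • u + (h / 4) • v with hc₀_def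
    clear_value c₀
    have hinner : ∀ s₁ s₂ : ℝ, |s₁| ≤ A → |s₂| ≤ B → c₀ + s₁ • u + s₂ • v ∈ M := by
      intro s₁ s₂ hs₁ hs₂
      obtain ⟨hs₁l, hs₁r⟩ := abs_le.mp hs₁
      obtain ⟨hs₂l, hs₂r⟩ := abs_le.mp hs₂
      rw [hA_def] at hs₁l hs₁r
      rw [hB_def] at hs₂l hs₂r
      set γ := (h / 4 + s₂) / h with hγ_def
      have hγ0 : 0 ≤ γ := by
        rw [hγ_def]
        apply div_nonneg _ hh0.le
        linarith
      have hγhalf : γ ≤ 1 / 2 := by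
        rw [hγ_def, div_le_iff₀ hh0]
        linarith
      have h1γ : 0 < 1 - γ := by linarith
      have hγh : γ * h = h / 4 + s₂ := by
        rw [hγ_def]
        field_simp
      clear_value γ
      have hnum0 : 0 ≤ (x₀ / 2 + d / 4 + s₁) - γ * x₀ := by nlinarith
      have hnum1 : (x₀ / 2 + d / 4 + s₁) - γ * x₀ ≤ (1 - γ) * d := by
        nlinarith [mul_nonneg (sub_nonneg.mpr hx₀d) (by linarith : (0:ℝ) ≤ 1 / 2 - γ)]
      set cc := ((x₀ / 2 + d / 4 + s₁) - γ * x₀) / ((1 - γ) * d) with hcc_def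
      have hcc0 : 0 ≤ cc := div_nonneg hnum0 (by positivity)
      have hcc1 : cc ≤ 1 := by
        rw [hcc_def, div_le_one (by positivity)]
        exact hnum1
      have hccd : (1 - γ) * (cc * d) = (x₀ / 2 + d / 4 + s₁) - γ * x₀ := by
        rw [hcc_def]
        field_simp
      clear_value cc
      have hn : (1 - cc) • p + cc • q ∈ M := hMconv hpM hqM (by linarith) hcc0 (by ring)
      have hfin : (1 - γ) • ((1 - cc) • p + cc • q) + γ • m ∈ M :=
        hMconv hn hmM (by linarith) hγ0 (by ring)
      have hid : c₀ + s₁ • u + s₂ • v = (1 - γ) • ((1 - cc) • p + cc • q) + γ • m := by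
        rw [hc₀_def, hq_eq, hm_eq]
        match_scalars
        · ring
        · linear_combination -hccd
        · linear_combination -hγh
      rw [hid]
      exact hfin
    have hdet1 : |u 0 * v 1 - v 0 * u 1| = 1 := by
      rw [hdv0, hdv1, show u 0 * (dd * u 0) - -dd * u 1 * u 1 = dd * (u 0 ^ 2 + u 1 ^ 2) by ring,
        hu2, mul_one, hdd1]
    have hvolM : volume M ≤ ENNReal.ofReal (2 * (d * h)) := by
      have hbox : M ⊆ p +ᵥ (lmap u v ''
          {x : Plane | x 0 ∈ Set.Icc 0 d ∧ x 1 ∈ Set.Icc (-h) h}) := by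
        intro x hx
        have hde := decomp u v hu1 hv huv (x - p)
        refine Set.mem_vadd_set.mpr
          ⟨(inner ℝ (x - p) u : ℝ) • u + (inner ℝ (x - p) v : ℝ) • v, ?_, ?_⟩
        · refine ⟨mk2 (inner ℝ (x - p) u : ℝ) (inner ℝ (x - p) v : ℝ), ?_, ?_⟩
          · obtain ⟨hs0, hsd⟩ := hslab x hx
            have hle : (inner ℝ (x - p) v : ℝ) ≤ h := hmmax x hx
            have hge : -h ≤ (inner ℝ (x - p) v : ℝ) := hmlow x hx
            exact ⟨⟨hs0, hsd⟩, ⟨hge, hle⟩⟩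
          · rw [lmap_apply]
            simp
        · show p + ((inner ℝ (x - p) u : ℝ) • u + (inner ℝ (x - p) v : ℝ) • v) = x
          rw [← hde]
          abel
      calc volume M
          ≤ volume (p +ᵥ (lmap u v ''
            {x : Plane | x 0 ∈ Set.Icc 0 d ∧ x 1 ∈ Set.Icc (-h) h})) := measure_mono hbox
        _ = volume (lmap u v ''
            {x : Plane | x 0 ∈ Set.Icc 0 d ∧ x 1 ∈ Set.Icc (-h) h}) := measure_vadd _ _ _
        _ = ENNReal.ofReal (2 * (d * h)) := by
            rw [volume_lmap_image, volume_box, hdet1, ENNReal.ofReal_one, one_mul,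
              ← ENNReal.ofReal_mul (by linarith : (0:ℝ) ≤ d - 0)]
            congr 1
            ring
    have hpar : ∀ (t p₁ zz : Plane), p₁ ∈ X ∩ (t +ᵥ Y) → zz ∈ X ∩ (t +ᵥ Y) →
        ∀ w₁ : Plane, (∀ α : ℝ, |α| ≤ 1 → c₀ + α • w₁ ∈ M) →
        ENNReal.ofReal |w₁ 0 * ((zz - p₁) 1 / 2) - ((zz - p₁) 0 / 2) * w₁ 1| ≤ volume M := by
      intro t p₁ zz hp₁ hzz w₁ hw₁
      set t' := (2:ℝ)⁻¹ • (tstar + t) with ht'_def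
      set q₀ := (2:ℝ)⁻¹ • (c₀ - w₁) + (2:ℝ)⁻¹ • p₁ with hq₀_def
      clear_value t' q₀
      have hsub : q₀ +ᵥ (lmap w₁ ((2:ℝ)⁻¹ • (zz - p₁)) ''
          {x : Plane | x 0 ∈ Set.Icc (0:ℝ) 1 ∧ x 1 ∈ Set.Icc (0:ℝ) 1}) ⊆ X ∩ (t' +ᵥ Y) := by
        intro x hx
        obtain ⟨s, hs, hxe⟩ := hx
        obtain ⟨xs, hxsbox, hse⟩ := hs
        obtain ⟨⟨hα0, hα1⟩, ⟨hβ0, hβ1⟩⟩ := hxsbox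
        have hm' : c₀ + (2 * xs 0 - 1) • w₁ ∈ M :=
          hw₁ _ (abs_le.mpr ⟨by linarith, by linarith⟩)
        have hbb : (1 - xs 1) • p₁ + xs 1 • zz ∈ X ∩ (t +ᵥ Y) :=
          (hXconv.inter (hYconv.vadd t)) hp₁ hzz (by linarith) hβ0 (by ring)
        have hxid : x = (2:ℝ)⁻¹ • (c₀ + (2 * xs 0 - 1) • w₁)
            + (2:ℝ)⁻¹ • ((1 - xs 1) • p₁ + xs 1 • zz) := by
          rw [← hxe, ← hse, lmap_apply, hq₀_def]
          show (2:ℝ)⁻¹ • (c₀ - w₁) + (2:ℝ)⁻¹ • p₁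
              + (xs 0 • w₁ + xs 1 • ((2:ℝ)⁻¹ • (zz - p₁))) = _
          module
        constructor
        · rw [hxid]
          exact hXconv hm'.1 hbb.1 (by norm_num) (by norm_num) (by norm_num)
        · obtain ⟨y₁, hy₁, hy₁e⟩ := hm'.2
          obtain ⟨y₂, hy₂, hy₂e⟩ := hbb.2
          refine Set.mem_vadd_set.mpr ⟨(2:ℝ)⁻¹ • y₁ + (2:ℝ)⁻¹ • y₂,
            hYconv hy₁ hy₂ (by norm_num) (by norm_num) (by norm_num), ?_⟩
          rw [hxid, ht'_def, ← hy₁e, ← hy₂e]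
          simp only [vadd_eq_add]
          module
      have hveq : volume (q₀ +ᵥ (lmap w₁ ((2:ℝ)⁻¹ • (zz - p₁)) ''
          {x : Plane | x 0 ∈ Set.Icc (0:ℝ) 1 ∧ x 1 ∈ Set.Icc (0:ℝ) 1}))
          = ENNReal.ofReal |w₁ 0 * ((zz - p₁) 1 / 2) - ((zz - p₁) 0 / 2) * w₁ 1| := by
        have c0 : ((2:ℝ)⁻¹ • (zz - p₁)) 0 = (zz - p₁) 0 / 2 := by
          rw [PiLp.smul_apply, smul_eq_mul]; ring
        have c1 : ((2:ℝ)⁻¹ • (zz - p₁)) 1 = (zz - p₁) 1 / 2 := by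
          rw [PiLp.smul_apply, smul_eq_mul]; ring
        rw [measure_vadd, volume_lmap_image, volume_box, c0, c1]
        norm_num
      calc ENNReal.ofReal |w₁ 0 * ((zz - p₁) 1 / 2) - ((zz - p₁) 0 / 2) * w₁ 1|
          = volume (q₀ +ᵥ (lmap w₁ ((2:ℝ)⁻¹ • (zz - p₁)) ''
            {x : Plane | x 0 ∈ Set.Icc (0:ℝ) 1 ∧ x 1 ∈ Set.Icc (0:ℝ) 1})) := hveq.symm
        _ ≤ volume (X ∩ (t' +ᵥ Y)) := measure_mono hsub
        _ ≤ volume M := hsupb t'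
    have hd4 : d = 4 * A := by rw [hA_def]; ring
    have hh4 : h = 4 * B := by rw [hB_def]; ring
    have hdh : (0:ℝ) ≤ 2 * (d * h) := by nlinarith
    have hchord : ∀ (t p₁ zz : Plane), p₁ ∈ X ∩ (t +ᵥ Y) → zz ∈ X ∩ (t +ᵥ Y) →
        |(inner ℝ (zz - p₁) u : ℝ)| ≤ 64 * A ∧ |(inner ℝ (zz - p₁) v : ℝ)| ≤ 64 * B := by
      intro t p₁ zz hp₁ hzz
      have hAu : ∀ α : ℝ, |α| ≤ 1 → c₀ + α • (A • u) ∈ M := by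
        intro α hα
        have hmem := hinner (α * A) 0
          (by rw [abs_mul, abs_of_pos hA]; nlinarith [abs_nonneg α])
          (by simpa using hB.le)
        have heq : c₀ + (α * A) • u + (0:ℝ) • v = c₀ + α • (A • u) := by module
        rw [heq] at hmem
        exact hmem
      have hBv : ∀ α : ℝ, |α| ≤ 1 → c₀ + α • (B • v) ∈ M := by
        intro α hα
        have hmem := hinner 0 (α * B)
          (by simpa using hA.le)
          (by rw [abs_mul, abs_of_pos hB]; nlinarith [abs_nonneg α])
        have heq : c₀ + (0:ℝ) • u + (α * B) • v = c₀ + α • (B • v) := by module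
        rw [heq] at hmem
        exact hmem
      have h1 := hpar t p₁ zz hp₁ hzz (A • u) hAu
      have h2 := hpar t p₁ zz hp₁ hzz (B • v) hBv
      have e1 : |(A • u) 0 * ((zz - p₁) 1 / 2) - ((zz - p₁) 0 / 2) * (A • u) 1|
          = A / 2 * |(inner ℝ (zz - p₁) v : ℝ)| := by
        have hwv : (inner ℝ (zz - p₁) v : ℝ)
            = dd * (u 0 * (zz - p₁) 1 - (zz - p₁) 0 * u 1) := by
          rw [inner_coords, hdv0, hdv1]
          ring
        simp only [PiLp.smul_apply, smul_eq_mul]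
        rw [show A * u 0 * ((zz - p₁) 1 / 2) - (zz - p₁) 0 / 2 * (A * u 1)
            = (A / 2) * (u 0 * (zz - p₁) 1 - (zz - p₁) 0 * u 1) by ring]
        rw [abs_mul, abs_of_pos (half_pos hA), hwv, abs_mul, hdd1, one_mul]
      have e2 : |(B • v) 0 * ((zz - p₁) 1 / 2) - ((zz - p₁) 0 / 2) * (B • v) 1|
          = B / 2 * |(inner ℝ (zz - p₁) u : ℝ)| := by
        simp only [PiLp.smul_apply, smul_eq_mul]
        rw [show B * v 0 * ((zz - p₁) 1 / 2) - (zz - p₁) 0 / 2 * (B * v 1)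
            = (B / 2) * (v 0 * (zz - p₁) 1 - (zz - p₁) 0 * v 1) by ring]
        rw [abs_mul, abs_of_pos (half_pos hB)]
        rw [show v 0 * (zz - p₁) 1 - (zz - p₁) 0 * v 1
            = -(dd * ((zz - p₁) 0 * u 0 + (zz - p₁) 1 * u 1)) by rw [hdv0, hdv1]; ring]
        rw [abs_neg, abs_mul, hdd1, one_mul, inner_coords]
      rw [e1] at h1
      rw [e2] at h2
      constructor
      · have hle := le_trans h2 hvolM
        rw [ENNReal.ofReal_le_ofReal_iff hdh] at hle
        have hkey : B / 2 * |(inner ℝ (zz - p₁) u : ℝ)| ≤ B / 2 * (64 * A) := by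
          rw [show B / 2 * (64 * A) = 2 * (d * h) by rw [hd4, hh4]; ring]
          exact hle
        exact le_of_mul_le_mul_left hkey (half_pos hB)
      · have hle := le_trans h1 hvolM
        rw [ENNReal.ofReal_le_ofReal_iff hdh] at hle
        have hkey : A / 2 * |(inner ℝ (zz - p₁) v : ℝ)| ≤ A / 2 * (64 * B) := by
          rw [show A / 2 * (64 * B) = 2 * (d * h) by rw [hd4, hh4]; ring]
          exact hle
        exact le_of_mul_le_mul_left hkey (half_pos hA)
    refine ⟨rectSet u v A B, -c₀, ⟨u, v, A, B, hu1, hv, huv, hA, hB, rfl⟩, ?_, ?_, ?_⟩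
    · rintro x ⟨s₁, s₂, hs₁, hs₂, rfl⟩
      refine Set.mem_vadd_set.mpr ⟨c₀ + s₁ • u + s₂ • v, hinner s₁ s₂ hs₁ hs₂, ?_⟩
      show -c₀ + (c₀ + s₁ • u + s₂ • v) = s₁ • u + s₂ • v
      abel
    · intro x hx
      obtain ⟨y, hy, hye⟩ := hx
      obtain ⟨hy0, hyd⟩ := hslab y hy
      have hyv1 : (inner ℝ (y - p) v : ℝ) ≤ h := hmmax y hy
      have hyv2 : -h ≤ (inner ℝ (y - p) v : ℝ) := hmlow y hy
      have hde := decomp u v hu1 hv huv (y - p)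
      set c1 := (inner ℝ (y - p) u : ℝ) with hc1_def
      set c2 := (inner ℝ (y - p) v : ℝ) with hc2_def
      clear_value c1 c2
      refine mem_smul_rectSet (u := u) (v := v)
        (s₁ := c1 - (x₀ / 2 + d / 4)) (s₂ := c2 - h / 4) (by norm_num) ?_ ?_ ?_
      · rw [← hye, hc₀_def]
        show -(p + (x₀ / 2 + d / 4) • u + (h / 4) • v) + y = _
        have hrw : -(p + (x₀ / 2 + d / 4) • u + (h / 4) • v) + y
            = (y - p) - (x₀ / 2 + d / 4) • u - (h / 4) • v := by abel
        rw [hrw, hde]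
        module
      · rw [abs_le]
        constructor
        · linarith
        · linarith
      · rw [abs_le]
        constructor
        · linarith
        · linarith
    · intro t
      rcases Set.eq_empty_or_nonempty (X ∩ (t +ᵥ Y)) with he | ⟨p₁, hp₁⟩
      · exact ⟨0, by rw [he]; simp⟩
      · refine ⟨-p₁, ?_⟩
        intro x hx
        obtain ⟨zz, hzz, hze⟩ := hx
        obtain ⟨hcu, hcv⟩ := hchord t p₁ zz hp₁ hzz
        have hde := decomp u v hu1 hv huv (zz - p₁)
        refine mem_smul_rectSet (u := u) (v := v)
          (s₁ := (inner ℝ (zz - p₁) u : ℝ)) (s₂ := (inner ℝ (zz - p₁) v : ℝ))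
          (by norm_num) ?_ hcu hcv
        rw [← hze]
        show -p₁ + zz = _
        rw [← hde]
        abel

  rcases le_total (inner ℝ (mm - p) (-v₀) : ℝ) (inner ℝ (mp - p) v₀ : ℝ) with hcase | hcase
  · refine main v₀ mp hv₀1 huv₀ hmpM (fun x hx => hmpmax hx) (fun x hx => ?_)
    have h1 : (inner ℝ (x - p) (-v₀) : ℝ) ≤ inner ℝ (mm - p) (-v₀) := hmmmax hx
    rw [inner_neg_right] at h1
    linarith
  · refine main (-v₀) mm (by rw [norm_neg]; exact hv₀1) (by rw [inner_neg_right, huv₀]; ring)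
      hmmM (fun x hx => hmmmax hx) (fun x hx => ?_)
    have h1 : (inner ℝ (x - p) v₀ : ℝ) ≤ inner ℝ (mp - p) v₀ := hmpmax hx
    rw [inner_neg_right] at hcase
    rw [inner_neg_right, inner_neg_right]
    linarith
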